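/- Let t₁, t₂ be adjacent terminals in G with {t₁,t₂} ∉ B. Then M is a minimal node multicut of (G,B) if and only if M is a minimal node multicut of (G/e, B'), where e = {t₁,t₂}, G/e is the graph obtained by contracting e, and B' is obtained from B by replacing t₁ and t₂ with the contracted vertex v_e. -/

import Mathlib

open SimpleGraph Set

variable {V : Type*}

/-- The set of terminals occurring in a set `B` of terminal pairs. -/
def terminalSet (B : Set (V × V)) : Set V := {v | ∃ p ∈ B, v = p.1 ∨ v = p.2}

/-- `s` and `t` are separated in `G - M` (the graph obtained by deleting the vertices of `M`). -/
def SepSets (G : SimpleGraph V) (M : Set V) (s t : V) : Prop :=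
  ∀ (hs : s ∈ (Mᶜ : Set V)) (ht : t ∈ (Mᶜ : Set V)),
    ¬ (G.induce (Mᶜ : Set V)).Reachable ⟨s, hs⟩ ⟨t, ht⟩

/-- `M` is a node multicut of `(G, B)`. -/
def IsNodeMulticut (G : SimpleGraph V) (B : Set (V × V)) (M : Set V) : Prop :=
  M ⊆ (terminalSet B)ᶜ ∧ ∀ p ∈ B, SepSets G M p.1 p.2

/-- `M` is a minimal node multicut of `(G, B)`. -/
def IsMinNodeMulticut (G : SimpleGraph V) (B : Set (V × V)) (M : Set V) : Prop :=
  IsNodeMulticut G B M ∧ ∀ M' ⊂ M, ¬ IsNodeMulticut G B M'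

/-- `C` is (the vertex set of) a connected component of `G - M`. -/
def IsCompOf (G : SimpleGraph V) (M : Set V) (C : Set V) : Prop :=
  ∃ c : (G.induce (Mᶜ : Set V)).ConnectedComponent, C = Subtype.val '' c.supp

/-- The graph `G / e` obtained by contracting the edge `e = {t₁, t₂}`: the vertex `t₂` is
removed and `t₁` plays the role of the contracted vertex `v_e`, which is adjacent to every
former neighbor of `t₁` or `t₂`. -/
def contractGraph (G : SimpleGraph V) (t₁ t₂ : V) : SimpleGraph {v : V // v ≠ t₂} where
  Adj a b := a ≠ b ∧
    (G.Adj a.1 b.1 ∨ (a.1 = t₁ ∧ G.Adj t₂ b.1) ∨ (b.1 = t₁ ∧ G.Adj a.1 t₂))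
  symm := ⟨by
    rintro a b ⟨hab, h | h | h⟩
    · exact ⟨hab.symm, Or.inl h.symm⟩
    · exact ⟨hab.symm, Or.inr (Or.inr ⟨h.1, h.2.symm⟩)⟩
    · exact ⟨hab.symm, Or.inr (Or.inl ⟨h.1, h.2.symm⟩)⟩⟩
  loopless := ⟨fun a h => h.1 rfl⟩

/-- The canonical map `V → V(G / e)` sending `t₂` to the contracted vertex (represented by
`t₁`) and every other vertex to itself. -/
noncomputable def contractMap (t₁ t₂ : V) (h : t₁ ≠ t₂) : V → {v : V // v ≠ t₂} :=
  open Classical in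
  fun v => if hv : v = t₂ then ⟨t₁, h⟩ else ⟨v, hv⟩


section Aux

variable {t₁ t₂ : V}

lemma cm_of_ne (h : t₁ ≠ t₂) {v : V} (hv : v ≠ t₂) :
    contractMap t₁ t₂ h v = ⟨v, hv⟩ := dif_neg hv

lemma cm_t₂ (h : t₁ ≠ t₂) : contractMap t₁ t₂ h t₂ = ⟨t₁, h⟩ := dif_pos rfl

lemma cm_val (h : t₁ ≠ t₂) (v' : {v : V // v ≠ t₂}) :
    contractMap t₁ t₂ h v'.1 = v' := cm_of_ne h v'.2

lemma cm_inj (h : t₁ ≠ t₂) {a b : V} (ha : a ≠ t₂) (hb : b ≠ t₂)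
    (e : contractMap t₁ t₂ h a = contractMap t₁ t₂ h b) : a = b := by
  rw [cm_of_ne h ha, cm_of_ne h hb] at e
  exact congrArg Subtype.val e

lemma cm_mem_image (h : t₁ ≠ t₂) {M : Set V} (hM2 : t₂ ∉ M) (v' : {v : V // v ≠ t₂}) :
    v' ∈ contractMap t₁ t₂ h '' M ↔ v'.1 ∈ M := by
  constructor
  · rintro ⟨m, hm, hfm⟩
    have hmne : m ≠ t₂ := fun e => hM2 (e ▸ hm)
    rw [cm_of_ne h hmne] at hfm
    cases hfm
    exact hm
  · intro hv
    exact ⟨v'.1, hv, cm_val h v'⟩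

lemma cm_notMem (h : t₁ ≠ t₂) {M : Set V} (hM1 : t₁ ∉ M) (hM2 : t₂ ∉ M) {v : V}
    (hv : v ∉ M) : contractMap t₁ t₂ h v ∉ contractMap t₁ t₂ h '' M := by
  intro hc
  rw [cm_mem_image h hM2] at hc
  by_cases hv2 : v = t₂
  · subst hv2
    rw [cm_t₂] at hc
    exact hM1 hc
  · rw [cm_of_ne h hv2] at hc
    exact hv hc

lemma cm_val_notMem (h : t₁ ≠ t₂) {M : Set V} (hM1 : t₁ ∉ M) {v : V}
    (hv : v ∉ M) : (contractMap t₁ t₂ h v).1 ∉ M := by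
  by_cases hv2 : v = t₂
  · subst hv2; rw [cm_t₂]; exact hM1
  · rw [cm_of_ne h hv2]; exact hv

lemma cm_mem_iff (h : t₁ ≠ t₂) {S : Set V} {m : V} (hm1 : m ≠ t₁) (hm2 : m ≠ t₂) :
    contractMap t₁ t₂ h m ∈ contractMap t₁ t₂ h '' S ↔ m ∈ S := by
  constructor
  · rintro ⟨s, hs, e⟩
    rw [cm_of_ne h hm2] at e
    by_cases hs2 : s = t₂
    · subst hs2
      rw [cm_t₂] at e
      exact absurd (show t₁ = m from congrArg Subtype.val e).symm hm1
    · rw [cm_of_ne h hs2] at e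
      exact (show s = m from congrArg Subtype.val e) ▸ hs
  · exact fun hm => Set.mem_image_of_mem _ hm

lemma terminalSet_image (h : t₁ ≠ t₂) (B : Set (V × V)) :
    terminalSet ((fun p => (contractMap t₁ t₂ h p.1, contractMap t₁ t₂ h p.2)) '' B)
      = contractMap t₁ t₂ h '' terminalSet B := by
  ext v'
  constructor
  · rintro ⟨p', ⟨p, hp, rfl⟩, hv⟩
    rcases hv with hv | hv
    · exact ⟨p.1, ⟨p, hp, Or.inl rfl⟩, hv.symm⟩
    · exact ⟨p.2, ⟨p, hp, Or.inr rfl⟩, hv.symm⟩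
  · rintro ⟨s, ⟨p, hp, hs⟩, rfl⟩
    rcases hs with rfl | rfl
    · exact ⟨_, ⟨p, hp, rfl⟩, Or.inl rfl⟩
    · exact ⟨_, ⟨p, hp, rfl⟩, Or.inr rfl⟩

end Aux

section Graph

variable {G : SimpleGraph V} {t₁ t₂ : V} {M : Set V}

lemma step_fwd (hadj : G.Adj t₁ t₂) (hM1 : t₁ ∉ M) (hM2 : t₂ ∉ M) {a c : V}
    (hac : G.Adj a c) (ha : a ∉ M) (hc : c ∉ M) :
    ((contractGraph G t₁ t₂).induce ((contractMap t₁ t₂ hadj.ne '' M)ᶜ : Set _)).Reachable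
      ⟨contractMap t₁ t₂ hadj.ne a, cm_notMem hadj.ne hM1 hM2 ha⟩
      ⟨contractMap t₁ t₂ hadj.ne c, cm_notMem hadj.ne hM1 hM2 hc⟩ := by
  by_cases he : contractMap t₁ t₂ hadj.ne a = contractMap t₁ t₂ hadj.ne c
  · have heq : (⟨contractMap t₁ t₂ hadj.ne a, cm_notMem hadj.ne hM1 hM2 ha⟩ :
        ↥((contractMap t₁ t₂ hadj.ne '' M)ᶜ : Set _)) =
        ⟨contractMap t₁ t₂ hadj.ne c, cm_notMem hadj.ne hM1 hM2 hc⟩ := Subtype.ext he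
    rw [heq]
  · apply SimpleGraph.Adj.reachable
    have hAdj : (contractGraph G t₁ t₂).Adj (contractMap t₁ t₂ hadj.ne a)
        (contractMap t₁ t₂ hadj.ne c) := by
      refine ⟨he, ?_⟩
      rcases eq_or_ne a t₂ with ha2 | ha2
      · rcases eq_or_ne c t₂ with hc2 | hc2
        · exact absurd (ha2.trans hc2.symm) hac.ne
        · refine Or.inr (Or.inl ⟨?_, ?_⟩)
          · rw [ha2, cm_t₂]
          · rw [cm_of_ne hadj.ne hc2]; exact ha2 ▸ hac
      · rcases eq_or_ne c t₂ with hc2 | hc2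
        · refine Or.inr (Or.inr ⟨?_, ?_⟩)
          · rw [hc2, cm_t₂]
          · rw [cm_of_ne hadj.ne ha2]; exact hc2 ▸ hac
        · refine Or.inl ?_
          rw [cm_of_ne hadj.ne ha2, cm_of_ne hadj.ne hc2]
          exact hac
    exact hAdj

lemma walk_fwd (hadj : G.Adj t₁ t₂) (hM1 : t₁ ∉ M) (hM2 : t₂ ∉ M)
    {x y : ↥(Mᶜ : Set V)} (w : (G.induce (Mᶜ : Set V)).Walk x y) :
    ((contractGraph G t₁ t₂).induce ((contractMap t₁ t₂ hadj.ne '' M)ᶜ : Set _)).Reachable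
      ⟨contractMap t₁ t₂ hadj.ne x.1, cm_notMem hadj.ne hM1 hM2 x.2⟩
      ⟨contractMap t₁ t₂ hadj.ne y.1, cm_notMem hadj.ne hM1 hM2 y.2⟩ := by
  induction w with
  | nil => rfl
  | @cons u z _ h p ih =>
    exact (step_fwd hadj hM1 hM2 h u.2 z.2).trans ih

lemma val_notMem (h : t₁ ≠ t₂) {M : Set V} (hM2 : t₂ ∉ M) {v' : {v : V // v ≠ t₂}}
    (hv : v' ∉ contractMap t₁ t₂ h '' M) : v'.1 ∉ M :=
  fun hc => hv ((cm_mem_image h hM2 v').mpr hc)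

lemma step_bwd (hadj : G.Adj t₁ t₂) (hM1 : t₁ ∉ M) (hM2 : t₂ ∉ M)
    {a' c' : {v : V // v ≠ t₂}} (h : (contractGraph G t₁ t₂).Adj a' c')
    (ha : a'.1 ∉ M) (hc : c'.1 ∉ M) :
    (G.induce (Mᶜ : Set V)).Reachable ⟨a'.1, ha⟩ ⟨c'.1, hc⟩ := by
  obtain ⟨hne, h1 | ⟨he, h2⟩ | ⟨he, h2⟩⟩ := h
  · exact SimpleGraph.Adj.reachable (by exact h1)
  · have e1 : (G.induce (Mᶜ : Set V)).Adj ⟨a'.1, ha⟩ ⟨t₂, hM2⟩ := by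
      show G.Adj a'.1 t₂; rw [he]; exact hadj
    have e2 : (G.induce (Mᶜ : Set V)).Adj ⟨t₂, hM2⟩ ⟨c'.1, hc⟩ := h2
    exact e1.reachable.trans e2.reachable
  · have e1 : (G.induce (Mᶜ : Set V)).Adj ⟨a'.1, ha⟩ ⟨t₂, hM2⟩ := h2
    have e2 : (G.induce (Mᶜ : Set V)).Adj ⟨t₂, hM2⟩ ⟨c'.1, hc⟩ := by
      show G.Adj t₂ c'.1; rw [he]; exact hadj.symm
    exact e1.reachable.trans e2.reachable

lemma walk_bwd (hadj : G.Adj t₁ t₂) (hM1 : t₁ ∉ M) (hM2 : t₂ ∉ M)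
    {x y : ↥((contractMap t₁ t₂ hadj.ne '' M)ᶜ : Set _)}
    (w : ((contractGraph G t₁ t₂).induce
      ((contractMap t₁ t₂ hadj.ne '' M)ᶜ : Set _)).Walk x y) :
    (G.induce (Mᶜ : Set V)).Reachable
      ⟨x.1.1, val_notMem hadj.ne hM2 x.2⟩ ⟨y.1.1, val_notMem hadj.ne hM2 y.2⟩ := by
  induction w with
  | nil => rfl
  | @cons u z _ h p ih =>
    exact (step_bwd hadj hM1 hM2 h (val_notMem hadj.ne hM2 u.2)
      (val_notMem hadj.ne hM2 z.2)).trans ih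

lemma link (hadj : G.Adj t₁ t₂) (hM1 : t₁ ∉ M) (hM2 : t₂ ∉ M) {s : V} (hs : s ∉ M) :
    (G.induce (Mᶜ : Set V)).Reachable ⟨s, hs⟩
      ⟨(contractMap t₁ t₂ hadj.ne s).1, cm_val_notMem hadj.ne hM1 hs⟩ := by
  by_cases hs2 : s = t₂
  · have e : (G.induce (Mᶜ : Set V)).Adj ⟨s, hs⟩
        ⟨(contractMap t₁ t₂ hadj.ne s).1, cm_val_notMem hadj.ne hM1 hs⟩ := by
      show G.Adj s (contractMap t₁ t₂ hadj.ne s).1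
      rw [hs2, cm_t₂]
      exact hadj.symm
    exact e.reachable
  · have heq : ((⟨s, hs⟩ : ↥(Mᶜ : Set V))) =
        ⟨(contractMap t₁ t₂ hadj.ne s).1, cm_val_notMem hadj.ne hM1 hs⟩ := by
      apply Subtype.ext
      show s = (contractMap t₁ t₂ hadj.ne s).1
      rw [cm_of_ne hadj.ne hs2]
    rw [← heq]

lemma sep_iff (hadj : G.Adj t₁ t₂) (hM1 : t₁ ∉ M) (hM2 : t₂ ∉ M) {s t : V}
    (hs : s ∉ M) (ht : t ∉ M) :
    SepSets G M s t ↔ SepSets (contractGraph G t₁ t₂) (contractMap t₁ t₂ hadj.ne '' M)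
      (contractMap t₁ t₂ hadj.ne s) (contractMap t₁ t₂ hadj.ne t) := by
  constructor
  · intro hsep hs' ht' hr
    obtain ⟨w⟩ := hr
    exact hsep hs ht ((link hadj hM1 hM2 hs).trans
      ((walk_bwd hadj hM1 hM2 w).trans (link hadj hM1 hM2 ht).symm))
  · intro hsep hs'' ht'' hr
    obtain ⟨w⟩ := hr
    exact hsep (cm_notMem hadj.ne hM1 hM2 hs) (cm_notMem hadj.ne hM1 hM2 ht)
      (walk_fwd hadj hM1 hM2 w)

lemma mc_iff {B : Set (V × V)} (hadj : G.Adj t₁ t₂)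
    (ht₁ : t₁ ∈ terminalSet B) (ht₂ : t₂ ∈ terminalSet B)
    (hM1 : t₁ ∉ M) (hM2 : t₂ ∉ M) :
    IsNodeMulticut G B M ↔
      IsNodeMulticut (contractGraph G t₁ t₂)
        ((fun p => (contractMap t₁ t₂ hadj.ne p.1, contractMap t₁ t₂ hadj.ne p.2)) '' B)
        (contractMap t₁ t₂ hadj.ne '' M) := by
  constructor
  · rintro ⟨hc1, hc2⟩
    refine ⟨?_, ?_⟩
    · rintro x ⟨m, hm, rfl⟩ hTm
      rw [terminalSet_image hadj.ne] at hTm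
      have hm1 : m ≠ t₁ := fun e => hc1 hm (e ▸ ht₁)
      have hm2 : m ≠ t₂ := fun e => hc1 hm (e ▸ ht₂)
      exact hc1 hm ((cm_mem_iff hadj.ne hm1 hm2).mp hTm)
    · rintro p' ⟨p, hp, rfl⟩
      have h1 : p.1 ∉ M := fun hcm => hc1 hcm ⟨p, hp, Or.inl rfl⟩
      have h2 : p.2 ∉ M := fun hcm => hc1 hcm ⟨p, hp, Or.inr rfl⟩
      exact (sep_iff hadj hM1 hM2 h1 h2).mp (hc2 p hp)
  · rintro ⟨hc1, hc2⟩
    have hsub : M ⊆ (terminalSet B)ᶜ := by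
      intro m hm hTm
      refine hc1 (Set.mem_image_of_mem _ hm) ?_
      rw [terminalSet_image hadj.ne]
      exact Set.mem_image_of_mem _ hTm
    refine ⟨hsub, ?_⟩
    intro p hp
    have h1 : p.1 ∉ M := fun hcm => hsub hcm ⟨p, hp, Or.inl rfl⟩
    have h2 : p.2 ∉ M := fun hcm => hsub hcm ⟨p, hp, Or.inr rfl⟩
    exact (sep_iff hadj hM1 hM2 h1 h2).mpr (hc2 _ ⟨p, hp, rfl⟩)

end Graph

/-- If `t₁` and `t₂` are adjacent terminals with `{t₁, t₂} ∉ B`, then `M`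
is a minimal node multicut of `(G, B)` if and only if (the image of) `M` is a minimal node
multicut of `(G / e, B')`, where `e = {t₁, t₂}` and `B'` is obtained from `B` by replacing
`t₁` and `t₂` with the contracted vertex. -/
theorem min_node_multicut_contract (G : SimpleGraph V) (B : Set (V × V)) (M : Set V)
    (t₁ t₂ : V) (hadj : G.Adj t₁ t₂)
    (ht₁ : t₁ ∈ terminalSet B) (ht₂ : t₂ ∈ terminalSet B)
    (hB : (t₁, t₂) ∉ B ∧ (t₂, t₁) ∉ B) :
    IsMinNodeMulticut G B M ↔
      IsMinNodeMulticut (contractGraph G t₁ t₂)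
        ((fun p => (contractMap t₁ t₂ hadj.ne p.1, contractMap t₁ t₂ hadj.ne p.2)) '' B)
        (contractMap t₁ t₂ hadj.ne '' M) := by
  constructor
  · rintro ⟨hmc, hmin⟩
    have hM1 : t₁ ∉ M := fun h => hmc.1 h ht₁
    have hM2 : t₂ ∉ M := fun h => hmc.1 h ht₂
    refine ⟨(mc_iff hadj ht₁ ht₂ hM1 hM2).mp hmc, ?_⟩
    intro N' hN' hNmc
    set N : Set V := {m ∈ M | contractMap t₁ t₂ hadj.ne m ∈ N'} with hNdef
    have hNsub : N ⊆ M := fun m hm => hm.1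
    have himg : contractMap t₁ t₂ hadj.ne '' N = N' := by
      apply subset_antisymm
      · rintro x ⟨m, hm, rfl⟩; exact hm.2
      · intro x hx
        obtain ⟨m, hm, rfl⟩ := hN'.1 hx
        exact ⟨m, ⟨hm, hx⟩, rfl⟩
    have hNM : N ⊂ M := by
      refine ⟨hNsub, fun hMN => ?_⟩
      refine hN'.2 ?_
      rintro x ⟨m, hm, rfl⟩
      exact (hMN hm).2
    have hN1 : t₁ ∉ N := fun h => hM1 (hNsub h)
    have hN2 : t₂ ∉ N := fun h => hM2 (hNsub h)
    rw [← himg] at hNmc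
    exact hmin N hNM ((mc_iff hadj ht₁ ht₂ hN1 hN2).mpr hNmc)
  · rintro ⟨hmc, hmin⟩
    have hft : contractMap t₁ t₂ hadj.ne t₁ ∈ terminalSet
        ((fun p => (contractMap t₁ t₂ hadj.ne p.1, contractMap t₁ t₂ hadj.ne p.2)) '' B) := by
      rw [terminalSet_image hadj.ne]
      exact Set.mem_image_of_mem _ ht₁
    have hM1 : t₁ ∉ M := fun h => hmc.1 (Set.mem_image_of_mem _ h) hft
    have hM2 : t₂ ∉ M := by
      intro h
      refine hmc.1 (Set.mem_image_of_mem _ h) ?_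
      have he : contractMap t₁ t₂ hadj.ne t₂ = contractMap t₁ t₂ hadj.ne t₁ := by
        rw [cm_t₂, cm_of_ne hadj.ne hadj.ne]
      rw [he]
      exact hft
    refine ⟨(mc_iff hadj ht₁ ht₂ hM1 hM2).mpr hmc, ?_⟩
    intro N hN hNmc
    have hN1 : t₁ ∉ N := fun h => hM1 (hN.1 h)
    have hN2 : t₂ ∉ N := fun h => hM2 (hN.1 h)
    refine hmin (contractMap t₁ t₂ hadj.ne '' N) ?_
      ((mc_iff hadj ht₁ ht₂ hN1 hN2).mp hNmc)
    refine ⟨Set.image_mono hN.1, fun hc => hN.2 ?_⟩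
    intro m hm
    obtain ⟨n, hn, he⟩ := hc (Set.mem_image_of_mem _ hm)
    have hn2 : n ≠ t₂ := fun e => hN2 (e ▸ hn)
    have hm2 : m ≠ t₂ := fun e => hM2 (e ▸ hm)
    exact cm_inj hadj.ne hn2 hm2 he ▸ hn
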